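/- Let m be a positive integer and G a finite semisimple group (a direct product of nonabelian simple groups) such that |x^G| ≤ m for every x ∈ X(G). Then |G| is bounded by a function of m only. -/

import Mathlib

/-- `Xset G` is the set of commutators `[x,y] = x⁻¹y⁻¹xy` such that `x` and `[x,y]`
both lie in some Sylow subgroup `P` of `G`, `y` arbitrary. -/
def Xset (G : Type*) [Group G] : Set G :=
  {z | ∃ (p : ℕ) (_ : Fact p.Prime) (P : Sylow p G) (x y : G),
    z = x⁻¹ * y⁻¹ * x * y ∧ x ∈ (P : Subgroup G) ∧ z ∈ (P : Subgroup G)}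

set_option linter.unusedSectionVars false
set_option maxHeartbeats 1000000

section SingleGroup
variable {S : Type*} [Group S] [Finite S]

lemma classCard_eq_index (z : S) :
    Nat.card {h : S // IsConj z h} = (Subgroup.centralizer {z}).index := by
  have h1 : (Subgroup.centralizer {z}).index = (MulAction.stabilizer (ConjAct S) z).index := by
    rw [Subgroup.centralizer_eq_comap_stabilizer]
    exact Subgroup.index_comap_of_surjective _ (MulEquiv.surjective _)
  rw [h1, MulAction.index_stabilizer, ← Nat.card_coe_set_eq]
  exact Nat.card_congr (Equiv.subtypeEquivRight fun h => by
    rw [ConjAct.mem_orbit_conjAct, isConj_comm])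

lemma card_le_factorial_of_ne_top [IsSimpleGroup S] {H : Subgroup S} (h : H ≠ ⊤) :
    Nat.card S ≤ (H.index).factorial := by
  have hker : H.normalCore = ⊥ := by
    rcases (Subgroup.normalCore_normal H).eq_bot_or_eq_top with h' | h'
    · exact h'
    · exact absurd (top_le_iff.mp (h' ▸ Subgroup.normalCore_le H)) h
  have hinj : Function.Injective (MulAction.toPermHom S (S ⧸ H)) := by
    rw [← MonoidHom.ker_eq_bot_iff, ← Subgroup.normalCore_eq_ker, hker]
  calc Nat.card S ≤ Nat.card (Equiv.Perm (S ⧸ H)) := Nat.card_le_card_of_injective _ hinj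
    _ = (H.index).factorial := by
        have : Fintype (S ⧸ H) := Fintype.ofFinite _
        have : DecidableEq (S ⧸ H) := Classical.decEq _
        rw [Nat.card_eq_fintype_card, Fintype.card_perm, Subgroup.index_eq_card,
          Nat.card_eq_fintype_card]

lemma centralizer_ne_top [IsSimpleGroup S] (hna : ∃ a b : S, a * b ≠ b * a) {z : S}
    (hz : z ≠ 1) : Subgroup.centralizer {z} ≠ ⊤ := by
  intro h
  have hzc : z ∈ Subgroup.center S := by
    rw [Subgroup.mem_center_iff]
    intro g
    have : g ∈ Subgroup.centralizer {z} := h ▸ Subgroup.mem_top g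
    exact (Subgroup.mem_centralizer_iff.mp this z rfl).symm ▸ rfl
  rcases (inferInstance : (Subgroup.center S).Normal).eq_bot_or_eq_top with hc | hc
  · exact hz (Subgroup.mem_bot.mp (hc ▸ hzc))
  · obtain ⟨a, b, hab⟩ := hna
    exact hab (Subgroup.mem_center_iff.mp (hc ▸ Subgroup.mem_top b : b ∈ Subgroup.center S) a)

lemma two_le_classCard [IsSimpleGroup S] (hna : ∃ a b : S, a * b ≠ b * a) {z : S}
    (hz : z ≠ 1) : 2 ≤ Nat.card {h : S // IsConj z h} := by
  rw [classCard_eq_index]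
  exact Subgroup.one_lt_index_of_ne_top (centralizer_ne_top hna hz)

lemma exists_comm_in_sylow [IsSimpleGroup S] (hna : ∃ a b : S, a * b ≠ b * a) :
    ∃ p : ℕ, p.Prime ∧ p ∣ Nat.card S ∧
      ∃ (P : Sylow p S) (x y : S), x ∈ (P : Subgroup S) ∧
        x⁻¹ * y⁻¹ * x * y ∈ (P : Subgroup S) ∧ x⁻¹ * y⁻¹ * x * y ≠ 1 := by
  obtain ⟨a, b, hab⟩ := hna
  have hnt : Nontrivial S := ⟨a * b, b * a, hab⟩
  have hcard : Nat.card S ≠ 1 := (Finite.one_lt_card (α := S)).ne'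
  set p := (Nat.card S).minFac with hp
  have hpp : p.Prime := Nat.minFac_prime hcard
  haveI : Fact p.Prime := ⟨hpp⟩
  have hdvd : p ∣ Nat.card S := Nat.minFac_dvd _
  obtain ⟨P⟩ : Nonempty (Sylow p S) := Sylow.nonempty
  refine ⟨p, hpp, hdvd, P, ?_⟩
  by_contra hcon
  push_neg at hcon
  have hP : Subgroup.normalizer (P : Set S) ≤ Subgroup.centralizer (P : Set S) := by
    intro y hy
    rw [Subgroup.mem_centralizer_iff]
    intro x hx
    have h1 : y⁻¹ * x * y ∈ (P : Subgroup S) := by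
      have h2 := (Subgroup.mem_normalizer_iff.mp (Subgroup.inv_mem _ hy) x).mp hx
      simpa using h2
    have hmem : x⁻¹ * y⁻¹ * x * y ∈ (P : Subgroup S) := by
      have := mul_mem (Subgroup.inv_mem (P : Subgroup S) hx) h1
      simpa [mul_assoc] using this
    have h3 := hcon x y hx hmem
    have h4 : y * (x * (x⁻¹ * y⁻¹ * x * y)) = y * (x * 1) := by rw [h3]
    simpa [mul_assoc] using h4
  have hcomp := MonoidHom.ker_transferSylow_isComplement' P hP
  rcases (MonoidHom.normal_ker (MonoidHom.transferSylow P hP)).eq_bot_or_eq_top with hk | hk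
  · have hPtop : (P : Subgroup S) = ⊤ := Subgroup.isComplement'_bot_left.mp (hk ▸ hcomp)
    have hpg : IsPGroup p S := by
      have h5 := P.2
      rw [hPtop] at h5
      exact h5.of_equiv Subgroup.topEquiv
    haveI := hpg.center_nontrivial
    have hcne : Subgroup.center S ≠ ⊥ := by
      obtain ⟨z, hz⟩ := exists_ne (1 : Subgroup.center S)
      intro hbot
      exact hz (Subtype.ext (Subgroup.mem_bot.mp (hbot ▸ z.2)))
    rcases (inferInstance : (Subgroup.center S).Normal).eq_bot_or_eq_top with hc | hc
    · exact hcne hc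
    · exact hab (Subgroup.mem_center_iff.mp
        (hc ▸ Subgroup.mem_top b : b ∈ Subgroup.center S) a)
  · have hPbot : (P : Subgroup S) = ⊥ := Subgroup.isComplement'_top_left.mp (hk ▸ hcomp)
    exact P.ne_bot_of_dvd_card hdvd hPbot

end SingleGroup

section PiGroup
variable {ι : Type} [Fintype ι] {S : ι → Type} [∀ i, Group (S i)]

/-- Conjugacy in a product is componentwise. -/
def conjPiEquiv (x : ∀ i, S i) :
    {h : ∀ i, S i // IsConj x h} ≃ ∀ i, {h : S i // IsConj (x i) h} where
  toFun h := fun i => ⟨h.1 i, by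
    obtain ⟨c, hc⟩ := isConj_iff.mp h.2
    exact isConj_iff.mpr ⟨c i, by rw [← hc]; rfl⟩⟩
  invFun h := ⟨fun i => (h i).1, by
    have hc : ∀ i, ∃ c : S i, c * x i * c⁻¹ = (h i).1 := fun i => isConj_iff.mp (h i).2
    refine isConj_iff.mpr ⟨fun i => (hc i).choose, funext fun i => (hc i).choose_spec⟩⟩
  left_inv h := Subtype.ext rfl
  right_inv h := funext fun i => Subtype.ext rfl

lemma card_conj_pi (x : ∀ i, S i) :
    Nat.card {h : ∀ i, S i // IsConj x h} = ∏ i, Nat.card {h : S i // IsConj (x i) h} := by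
  rw [Nat.card_congr (conjPiEquiv x), Nat.card_pi]

lemma card_conj_one {T : Type*} [Group T] : Nat.card {h : T // IsConj (1 : T) h} = 1 := by
  have : Unique {h : T // IsConj (1 : T) h} :=
    { default := ⟨1, IsConj.refl 1⟩
      uniq := fun h => Subtype.ext (isConj_one_right.mp h.2) }
  exact Nat.card_unique

lemma isPGroup_pi {p : ℕ} (K : ∀ i, Subgroup (S i)) (hK : ∀ i, IsPGroup p (K i)) :
    IsPGroup p (Subgroup.pi Set.univ K) := by
  intro g
  have hgi : ∀ i, (g : ∀ i, S i) i ∈ K i := fun i =>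
    (Subgroup.mem_pi Set.univ).mp g.2 i (Set.mem_univ i)
  have hord : ∀ i, ∃ k : ℕ, ((g : ∀ i, S i) i) ^ p ^ k = 1 := by
    intro i
    obtain ⟨k, hk⟩ := hK i ⟨(g : ∀ i, S i) i, hgi i⟩
    exact ⟨k, by simpa [Subtype.ext_iff] using hk⟩
  choose k hk using hord
  refine ⟨∑ i, k i, ?_⟩
  refine Subtype.ext (funext fun i => ?_)
  show ((g : ∀ i, S i) ^ p ^ ∑ i, k i) i = (1 : ∀ i, S i) i
  rw [Pi.pow_apply, Pi.one_apply]
  have h1 : orderOf ((g : ∀ i, S i) i) ∣ p ^ k i := orderOf_dvd_of_pow_eq_one (hk i)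
  have h2 : p ^ k i ∣ p ^ ∑ i, k i :=
    pow_dvd_pow p (Finset.single_le_sum (fun _ _ => Nat.zero_le _) (Finset.mem_univ i))
  exact orderOf_dvd_iff_pow_eq_one.mp (h1.trans h2)

lemma mem_Xset_of_pi {p : ℕ} [Fact p.Prime] (T : Finset ι)
    (P : ∀ i ∈ T, Sylow p (S i)) (x y : ∀ i, S i)
    (hx : ∀ i (h : i ∈ T), x i ∈ (P i h : Subgroup (S i)))
    (hz : ∀ i (h : i ∈ T), (x i)⁻¹ * (y i)⁻¹ * x i * y i ∈ (P i h : Subgroup (S i)))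
    (hxt : ∀ i ∉ T, x i = 1) (hyt : ∀ i ∉ T, y i = 1) :
    x⁻¹ * y⁻¹ * x * y ∈ Xset (∀ i, S i) := by
  classical
  set K : ∀ i, Subgroup (S i) := fun i => if h : i ∈ T then (P i h : Subgroup (S i)) else ⊥
    with hKdef
  have hKp : ∀ i, IsPGroup p (K i) := by
    intro i
    by_cases h : i ∈ T
    · have hKeq : K i = (P i h : Subgroup (S i)) := by simp [hKdef, dif_pos h]
      exact hKeq ▸ (P i h).2
    · have hKeq : K i = (⊥ : Subgroup (S i)) := by simp [hKdef, dif_neg h]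
      exact hKeq ▸ (IsPGroup.of_bot (p := p) (G := S i))
  obtain ⟨Q, hQ⟩ := (isPGroup_pi K hKp).exists_le_sylow
  have hcomp : ∀ i, (x⁻¹ * y⁻¹ * x * y) i = (x i)⁻¹ * (y i)⁻¹ * x i * y i := fun i => rfl
  have hxK : x ∈ Subgroup.pi Set.univ K := by
    rw [Subgroup.mem_pi]
    intro i _
    by_cases h : i ∈ T
    · have hKeq : K i = (P i h : Subgroup (S i)) := by simp [hKdef, dif_pos h]
      exact hKeq ▸ hx i h
    · have hKeq : K i = (⊥ : Subgroup (S i)) := by simp [hKdef, dif_neg h]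
      rw [hKeq, hxt i h]; exact Subgroup.one_mem _
  have hzK : x⁻¹ * y⁻¹ * x * y ∈ Subgroup.pi Set.univ K := by
    rw [Subgroup.mem_pi]
    intro i _
    rw [hcomp i]
    by_cases h : i ∈ T
    · have hKeq : K i = (P i h : Subgroup (S i)) := by simp [hKdef, dif_pos h]
      exact hKeq ▸ hz i h
    · have hKeq : K i = (⊥ : Subgroup (S i)) := by simp [hKdef, dif_neg h]
      rw [hKeq, hxt i h, hyt i h]; simp
  exact ⟨p, ‹Fact p.Prime›, Q, x, y, rfl, hQ hxK, hQ hzK⟩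

lemma classBound_of_fiber [∀ i, Finite (S i)] {m : ℕ}
    (hX : ∀ w ∈ Xset (∀ j, S j), Nat.card {h : ∀ j, S j // IsConj w h} ≤ m)
    {p : ℕ} [Fact p.Prime] (T : Finset ι)
    (hT : ∀ i ∈ T, ∃ (P : Sylow p (S i)) (x y : S i), x ∈ (P : Subgroup (S i)) ∧
      x⁻¹ * y⁻¹ * x * y ∈ (P : Subgroup (S i)) ∧ x⁻¹ * y⁻¹ * x * y ≠ 1) :
    ∃ z : ∀ i, S i, (∀ i ∈ T, z i ≠ 1) ∧ (∀ i ∉ T, z i = 1) ∧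
      Nat.card {h : ∀ j, S j // IsConj z h} ≤ m := by
  classical
  choose P x y hx hz hne using hT
  set xg : ∀ i, S i := fun i => if h : i ∈ T then x i h else 1 with hxgdef
  set yg : ∀ i, S i := fun i => if h : i ∈ T then y i h else 1 with hygdef
  have hxg : ∀ i (h : i ∈ T), xg i = x i h := fun i h => by simp [hxgdef, dif_pos h]
  have hyg : ∀ i (h : i ∈ T), yg i = y i h := fun i h => by simp [hygdef, dif_pos h]
  have hxg' : ∀ i ∉ T, xg i = 1 := fun i h => by simp [hxgdef, dif_neg h]
  have hyg' : ∀ i ∉ T, yg i = 1 := fun i h => by simp [hygdef, dif_neg h]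
  refine ⟨xg⁻¹ * yg⁻¹ * xg * yg, ?_, ?_, ?_⟩
  · intro i h
    show (xg i)⁻¹ * (yg i)⁻¹ * xg i * yg i ≠ 1
    rw [hxg i h, hyg i h]
    exact hne i h
  · intro i h
    show (xg i)⁻¹ * (yg i)⁻¹ * xg i * yg i = 1
    rw [hxg' i h, hyg' i h]
    simp
  · apply hX
    refine mem_Xset_of_pi T P xg yg ?_ ?_ hxg' hyg'
    · intro i h
      rw [hxg i h]
      exact hx i h
    · intro i h
      rw [hxg i h, hyg i h]
      exact hz i h

end PiGroup

/-- If `G` is a finite semisimple group (a direct product of nonabelian simple groups)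
with `|x^G| ≤ m` for all `x ∈ Xset G`, then `|G|` is `m`-bounded. -/
theorem semisimple_bounded :
    ∃ f : ℕ → ℕ, ∀ (ι : Type) (_ : Fintype ι) (S : ι → Type) (_ : ∀ i, Group (S i))
      (_ : ∀ i, Finite (S i)),
      (∀ i, IsSimpleGroup (S i)) → (∀ i, ∃ a b : S i, a * b ≠ b * a) →
      ∀ m : ℕ, 0 < m →
      (∀ x ∈ Xset (∀ i, S i), Nat.card {h : ∀ i, S i // IsConj x h} ≤ m) →
      Nat.card (∀ i, S i) ≤ f m := by
  classical
  refine ⟨fun m => m.factorial ^ ((m.factorial + 1) * m), ?_⟩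
  intro ι _ S _ _ hsimple hna m hm hX
  choose pr hpr hdvd hQ using fun i => exists_comm_in_sylow (hna i)
  -- instances
  have hfinpi : Finite (∀ i, S i) := inferInstance
  -- notation for class sizes in factors
  set c : ∀ i, S i → ℕ := fun i z => Nat.card {h : S i // IsConj z h} with hc
  have hc1 : ∀ (i) (z : S i), 1 ≤ c i z := by
    intro i z
    have : Nonempty {h : S i // IsConj z h} := ⟨⟨z, IsConj.refl z⟩⟩
    exact Nat.card_pos
  -- Step A: each factor has size at most m!
  have hfactor : ∀ i, Nat.card (S i) ≤ m.factorial := by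
    intro i
    haveI : Fact (pr i).Prime := ⟨hpr i⟩
    have hT : ∀ j ∈ ({i} : Finset ι), ∃ (P : Sylow (pr i) (S j)) (x y : S j),
        x ∈ (P : Subgroup (S j)) ∧ x⁻¹ * y⁻¹ * x * y ∈ (P : Subgroup (S j)) ∧
        x⁻¹ * y⁻¹ * x * y ≠ 1 := by
      intro j hj
      rw [Finset.mem_singleton.mp hj]
      exact hQ i
    obtain ⟨z, hzne, hztriv, hzcard⟩ := classBound_of_fiber hX ({i} : Finset ι) hT
    have hprod : Nat.card {h : ∀ j, S j // IsConj z h} = c i (z i) := by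
      rw [card_conj_pi z]
      refine Finset.prod_eq_single_of_mem i (Finset.mem_univ i) ?_
      intro j _ hji
      rw [hztriv j (by simp [hji]), card_conj_one]
    have hci : c i (z i) ≤ m := hprod ▸ hzcard
    have hzi : z i ≠ 1 := hzne i (Finset.mem_singleton_self i)
    have hidx : (Subgroup.centralizer {z i}).index ≤ m := by
      rw [← classCard_eq_index]
      exact hci
    calc Nat.card (S i) ≤ ((Subgroup.centralizer {z i}).index).factorial :=
          card_le_factorial_of_ne_top (centralizer_ne_top (hna i) hzi)
      _ ≤ m.factorial := Nat.factorial_le hidx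
  -- primes are at most m!
  have hprle : ∀ i, pr i ≤ m.factorial := by
    intro i
    have h1 : pr i ≤ Nat.card (S i) := Nat.le_of_dvd Nat.card_pos (hdvd i)
    exact h1.trans (hfactor i)
  -- Step B: each fiber of `pr` has size at most m
  have hfiber : ∀ q, (Finset.univ.filter fun i => pr i = q).card ≤ m := by
    intro q
    set T := Finset.univ.filter fun i => pr i = q with hTdef
    rcases T.eq_empty_or_nonempty with hTe | ⟨i0, hi0⟩
    · simp [hTe, Nat.zero_le]
    · have hq : pr i0 = q := (Finset.mem_filter.mp hi0).2
      haveI : Fact q.Prime := ⟨hq ▸ hpr i0⟩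
      have hT : ∀ i ∈ T, ∃ (P : Sylow q (S i)) (x y : S i),
          x ∈ (P : Subgroup (S i)) ∧ x⁻¹ * y⁻¹ * x * y ∈ (P : Subgroup (S i)) ∧
          x⁻¹ * y⁻¹ * x * y ≠ 1 := by
        intro i hi
        have hqi : pr i = q := (Finset.mem_filter.mp hi).2
        exact hqi ▸ hQ i
      obtain ⟨z, hzne, hztriv, hzcard⟩ := classBound_of_fiber hX T hT
      have hlow : 2 ^ T.card ≤ Nat.card {h : ∀ j, S j // IsConj z h} := by
        rw [card_conj_pi z]
        calc (2 : ℕ) ^ T.card = ∏ _i ∈ T, 2 := (Finset.prod_const 2).symm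
          _ ≤ ∏ i ∈ T, c i (z i) :=
              Finset.prod_le_prod' fun i hi => two_le_classCard (hna i) (hzne i hi)
          _ ≤ ∏ i, c i (z i) :=
              Finset.prod_le_prod_of_subset_of_one_le' (Finset.subset_univ T)
                (fun i _ _ => hc1 i (z i))
      have h2m : 2 ^ T.card ≤ m := hlow.trans hzcard
      exact le_of_lt (lt_of_lt_of_le (Nat.lt_two_pow_self (n := T.card)) h2m)
  -- bound the number of factors
  have hcardι : Fintype.card ι ≤ (m.factorial + 1) * m := by
    have hmap : ∀ i ∈ Finset.univ, pr i ∈ Finset.range (m.factorial + 1) := by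
      intro i _
      rw [Finset.mem_range]
      exact Nat.lt_succ_of_le (hprle i)
    calc Fintype.card ι = Finset.univ.card := (Finset.card_univ).symm
      _ = ∑ q ∈ Finset.range (m.factorial + 1),
            (Finset.univ.filter fun i => pr i = q).card :=
          Finset.card_eq_sum_card_fiberwise hmap
      _ ≤ (Finset.range (m.factorial + 1)).card * m :=
          Finset.sum_le_card_nsmul _ _ m (fun q _ => hfiber q)
      _ = (m.factorial + 1) * m := by rw [Finset.card_range]
  -- final bound
  calc Nat.card (∀ i, S i) = ∏ i, Nat.card (S i) := Nat.card_pi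
    _ ≤ ∏ _i : ι, m.factorial := Finset.prod_le_prod' fun i _ => hfactor i
    _ = m.factorial ^ Fintype.card ι := by rw [Finset.prod_const, Finset.card_univ]
    _ ≤ m.factorial ^ ((m.factorial + 1) * m) :=
        Nat.pow_le_pow_right (Nat.succ_le_of_lt m.factorial_pos) hcardι
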